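/- Let r ≥ 2, l ≥ 2 and let π : ℤ^r → ℤ^l be a surjective group homomorphism. Then every 1-cocycle α : ℤ^r → ℤ[x_1^{±1},…,x_l^{±1}] for the translation action through π is a coboundary: there exists a ∈ ℤ[x_1^{±1},…,x_l^{±1}] such that α(m) = x^{π(m)}·a − a for all m ∈ ℤ^r. (Equivalently, the first group cohomology of ℤ^r with coefficients in ℤ[ℤ^l], acting by translation through π, vanishes.) -/

import Mathlib

noncomputable section

/-- The monomial `x^u` in the Laurent polynomial ring `ℤ[x₁^{±1},…,x_l^{±1}] = ℤ[ℤ^l]`. -/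
def xpow {l : ℕ} (u : Fin l → ℤ) : AddMonoidAlgebra ℤ (Fin l → ℤ) :=
  AddMonoidAlgebra.single u 1

/-- A 1-cocycle for the translation action of `ℤ^r` on `ℤ[ℤ^l]` through `π`. -/
def IsCocycle {r l : ℕ} (π : (Fin r → ℤ) →+ (Fin l → ℤ))
    (α : (Fin r → ℤ) → AddMonoidAlgebra ℤ (Fin l → ℤ)) : Prop :=
  ∀ m m' : Fin r → ℤ, α (m + m') = xpow (π m) * α m' + α m

lemma xpow_add {l : ℕ} (u v : Fin l → ℤ) : xpow (u + v) = xpow u * xpow v := by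
  simp [xpow, AddMonoidAlgebra.single_mul_single]

lemma xpow_zero {l : ℕ} : xpow (0 : Fin l → ℤ) = 1 := rfl

/-- `x^u − 1` divides `x^{v+u} − 1` whenever it divides `x^v − 1`. -/
lemma dvd_step {l : ℕ} (u v : Fin l → ℤ)
    (h : (xpow u - 1) ∣ (xpow v - 1)) : (xpow u - 1) ∣ (xpow (v + u) - 1) := by
  rw [xpow_add]
  have : xpow v * xpow u - 1 = xpow u * (xpow v - 1) + (xpow u - 1) := by ring
  rw [this]
  exact dvd_add (h.mul_left _) dvd_rfl

/-- `x^u − 1` divides `x^{-v} − 1` whenever it divides `x^v − 1`. -/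
lemma dvd_neg_step {l : ℕ} (u v : Fin l → ℤ)
    (h : (xpow u - 1) ∣ (xpow v - 1)) : (xpow u - 1) ∣ (xpow (-v) - 1) := by
  have h2 : xpow (-v) * xpow v = 1 := by rw [← xpow_add, neg_add_cancel, xpow_zero]
  have : xpow (-v) - 1 = -(xpow (-v) * (xpow v - 1)) := by
    rw [mul_sub, h2]; ring
  rw [this]
  exact (h.mul_left _).neg_right

/-- `x^u − 1` divides `x^{n•u} − 1` for any integer `n`. -/
lemma sub_one_dvd_zsmul {l : ℕ} (u : Fin l → ℤ) (n : ℤ) :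
    (xpow u - 1) ∣ (xpow (n • u) - 1) := by
  induction n using Int.induction_on with
  | zero => simp [xpow_zero]
  | succ k ih =>
    have : ((k : ℤ) + 1) • u = (k : ℤ) • u + u := by rw [add_smul, one_smul]
    rw [this]
    exact dvd_step u _ ih
  | pred k ih =>
    have h1 : (-(k : ℤ) - 1) • u = -(-((-(k : ℤ)) • u) + u) := by
      module
    have step1 : (xpow u - 1) ∣ (xpow (-((-(k : ℤ)) • u)) - 1) := dvd_neg_step u _ ih
    have step2 : (xpow u - 1) ∣ (xpow (-((-(k : ℤ)) • u) + u) - 1) := dvd_step u _ step1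
    rw [h1]
    exact dvd_neg_step u _ step2

theorem cocycle_is_coboundary {r l : ℕ} (hr : 2 ≤ r) (hl : 2 ≤ l)
    (π : (Fin r → ℤ) →+ (Fin l → ℤ)) (hπ : Function.Surjective π)
    (α : (Fin r → ℤ) → AddMonoidAlgebra ℤ (Fin l → ℤ)) (hα : IsCocycle π α) :
    ∃ a : AddMonoidAlgebra ℤ (Fin l → ℤ), ∀ m : Fin r → ℤ, α m = xpow (π m) * a - a := by
  have h0 : (0:ℕ) < l := by omega
  have h1 : (1:ℕ) < l := by omega
  set i0 : Fin l := ⟨0, h0⟩ with hi0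
  set i1 : Fin l := ⟨1, h1⟩ with hi1
  have hi01 : i0 ≠ i1 := by
    simp [hi0, hi1, Fin.ext_iff]
  set e0 : Fin l → ℤ := Pi.single i0 1 with he0
  set e1 : Fin l → ℤ := Pi.single i1 1 with he1
  have he0i0 : e0 i0 = 1 := by simp [he0]
  have he1i0 : e1 i0 = 0 := by
    simp [he1, Pi.single_apply, Ne.symm hi01]
  -- the group hom killing the 0-th coordinate
  set f : (Fin l → ℤ) →+ (Fin l → ℤ) :=
    AddMonoidHom.mk' (fun u => u - u i0 • e0) (by
      intro a b
      funext j
      by_cases hj : j = i0 <;>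
        simp [he0, Pi.single_apply, hj] <;> ring) with hf
  have hfapp : ∀ u, f u = u - u i0 • e0 := fun u => rfl
  set φ : AddMonoidAlgebra ℤ (Fin l → ℤ) →+* AddMonoidAlgebra ℤ (Fin l → ℤ) :=
    AddMonoidAlgebra.mapDomainRingHom ℤ f with hφ
  have hφs : ∀ (u : Fin l → ℤ) (b : ℤ),
      φ (AddMonoidAlgebra.single u b) = AddMonoidAlgebra.single (f u) b := by
    intro u b
    simp [hφ, AddMonoidAlgebra.mapDomainRingHom, Finsupp.mapDomain_single]
  have hφx : ∀ u, φ (xpow u) = xpow (f u) := fun u => hφs u 1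
  have hfe0 : f e0 = 0 := by
    rw [hfapp, he0i0, one_smul, sub_self]
  have hfe1 : f e1 = e1 := by
    rw [hfapp, he1i0, zero_smul, sub_zero]
  -- key divisibility: x^{e0} - 1 ∣ c - φ c
  have hdvd : ∀ c : AddMonoidAlgebra ℤ (Fin l → ℤ), (xpow e0 - 1) ∣ (c - φ c) := by
    intro c
    induction c using AddMonoidAlgebra.induction_linear with
    | zero => simp
    | add a b ha hb =>
      rw [map_add, add_sub_add_comm]
      exact dvd_add ha hb
    | single u b =>
      have key : (AddMonoidAlgebra.single u b : AddMonoidAlgebra ℤ (Fin l → ℤ))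
          - φ (AddMonoidAlgebra.single u b)
          = AddMonoidAlgebra.single (0 : Fin l → ℤ) b * (xpow u - xpow (f u)) := by
        rw [hφs, mul_sub]
        simp [xpow, AddMonoidAlgebra.single_mul_single]
      refine key ▸ Dvd.dvd.mul_left ?_ _
      -- x^{e0}-1 ∣ x^u - x^{f u}
      have hu : u = f u + (u i0) • e0 := by
        rw [hfapp]; funext j; simp
      have h2 : xpow u - xpow (f u) = xpow (f u) * (xpow ((u i0) • e0) - 1) := by
        rw [mul_sub, mul_one, ← xpow_add, ← hu]
      rw [h2]
      exact (sub_one_dvd_zsmul e0 (u i0)).mul_left _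
  -- cocycle symmetry relation
  have hrel : ∀ m m' : Fin r → ℤ,
      (xpow (π m) - 1) * α m' = (xpow (π m') - 1) * α m := by
    intro m m'
    have h1 := hα m m'
    have h2 := hα m' m
    rw [add_comm] at h2
    rw [h1] at h2
    linear_combination h2
  obtain ⟨m0, hm0⟩ := hπ e0
  obtain ⟨m1, hm1⟩ := hπ e1
  -- x^u - 1 ≠ 0 for u ≠ 0
  have hne : ∀ u : Fin l → ℤ, u ≠ 0 → xpow u - (1 : AddMonoidAlgebra ℤ (Fin l → ℤ)) ≠ 0 := by
    intro u hu h
    have h1 : xpow u = (1 : AddMonoidAlgebra ℤ (Fin l → ℤ)) := by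
      linear_combination h
    rw [AddMonoidAlgebra.one_def] at h1
    have h1' : AddMonoidAlgebra.single u (1:ℤ) = AddMonoidAlgebra.single (0 : Fin l → ℤ) 1 := h1
    rcases AddMonoidAlgebra.single_inj.mp h1' with ⟨h2, _⟩ | ⟨h2, _⟩
    · exact hu h2
    · exact one_ne_zero h2
  have he1ne : e1 ≠ 0 := by
    intro h
    have := congr_fun h i1
    simp [he1] at this
  have he0ne : e0 ≠ 0 := by
    intro h
    have := congr_fun h i0
    simp [he0] at this
  -- apply φ to the relation between m0 and m1
  have hφα : φ (α m0) = 0 := by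
    have h := hrel m1 m0
    rw [hm0, hm1] at h
    have hc := congr_arg φ h
    simp only [map_mul, map_sub, map_one, hφx, hfe0, hfe1, xpow_zero, sub_self,
      zero_mul] at hc
    rcases mul_eq_zero.mp hc with h' | h'
    · exact absurd h' (hne e1 he1ne)
    · exact h'
  -- so x^{e0} - 1 divides α m0
  obtain ⟨a, ha⟩ : (xpow e0 - 1) ∣ α m0 := by
    have := hdvd (α m0)
    rwa [hφα, sub_zero] at this
  refine ⟨a, fun m => ?_⟩
  have h := hrel m m0
  rw [hm0, ha] at h
  have hc : (xpow e0 - 1) * α m = (xpow e0 - 1) * ((xpow (π m) - 1) * a) := by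
    linear_combination -h
  have := mul_left_cancel₀ (hne e0 he0ne) hc
  rw [this]; ring
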